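/- In the maximal model of Proposition 8 (G_k as above, Q_k = G_k ⊗ 𝖰, Z_{kℓ} ∝ G_kG_ℓ ⊗ 𝖧), all the operators Z_{kℓ} for distinct unordered pairs {k,ℓ} are linearly independent, provided 𝖧 ≠ 0. -/

import Mathlib

open Matrix
open scoped TensorProduct

/-- The Pauli matrix σ₁. -/
noncomputable def pauli1 : Matrix (Fin 2) (Fin 2) ℂ := !![0, 1; 1, 0]
/-- The Pauli matrix σ₂. -/
noncomputable def pauli2 : Matrix (Fin 2) (Fin 2) ℂ := !![0, -Complex.I; Complex.I, 0]
/-- The Pauli matrix σ₃. -/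
noncomputable def pauli3 : Matrix (Fin 2) (Fin 2) ℂ := !![1, 0; 0, -1]

/-- The n-fold tensor (Kronecker) product of 2×2 matrices, realized as a matrix on
    the index set Fin n → Fin 2: entry (x,y) is the product of the factor entries. -/
noncomputable def tensorFun {n : ℕ} (fac : Fin n → Matrix (Fin 2) (Fin 2) ℂ) :
    Matrix (Fin n → Fin 2) (Fin n → Fin 2) ℂ :=
  Matrix.of fun x y => ∏ p, fac p (x p) (y p)

/-- γ_j (1-based j): γ_1 = σ₁^{⊗n}, γ_j = σ₁^{⊗(n-j+1)} ⊗ σ₃ ⊗ I₂^{⊗(j-2)} for 2 ≤ j ≤ n.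
    The factor at (1-based) tensor position p is σ₁ if p ≤ n-j+1, σ₃ if p = n-j+2, I₂ else. -/
noncomputable def gammaMat (n j : ℕ) : Matrix (Fin n → Fin 2) (Fin n → Fin 2) ℂ :=
  tensorFun fun p =>
    if p.val + 1 ≤ n - j + 1 then pauli1 else if p.val + 1 = n - j + 2 then pauli3 else 1

/-- γ̃_j (1-based j): γ̃_j = σ₁^{⊗(n-j)} ⊗ σ₂ ⊗ I₂^{⊗(j-1)} for 1 ≤ j ≤ n. -/
noncomputable def gtildeMat (n j : ℕ) : Matrix (Fin n → Fin 2) (Fin n → Fin 2) ℂ :=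
  tensorFun fun p =>
    if p.val + 1 ≤ n - j then pauli1 else if p.val + 1 = n - j + 1 then pauli2 else 1

/-- The 2n generators γ_1,…,γ_n, γ̃_1,…,γ̃_n of Cl(2n). -/
noncomputable def cliffGen (n : ℕ) (i : Fin (2 * n)) :
    Matrix (Fin n → Fin 2) (Fin n → Fin 2) ℂ :=
  if i.val < n then gammaMat n (i.val + 1) else gtildeMat n (i.val - n + 1)

/-- Γ_j := i γ_j γ̃_j, ℕ-guarded, in the standard tensor-product representation of
    Cl(2(M−1)) on ℂ^{2^{M−1}}. -/
noncomputable def GammaOf (M : ℕ) (j : ℕ) :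
    Matrix (Fin (M - 1) → Fin 2) (Fin (M - 1) → Fin 2) ℂ :=
  if j < M - 1 then
    Complex.I • (gammaMat (M - 1) (j + 1) * gtildeMat (M - 1) (j + 1))
  else 1

/-- The dot product a_k · a_ℓ ∈ {0,1} (as a natural number), ℕ-guarded in k, ℓ. -/
def dotOf {n M : ℕ} (a : Fin M → Fin n → ZMod 2) (k ℓ : ℕ) : ℕ :=
  if h : k < M ∧ ℓ < M then (∑ j, a ⟨k, h.1⟩ j * a ⟨ℓ, h.2⟩ j).val else 0

/-- G_1 = γ_1, G_m = (∏_{j<m} Γ_j^{a_j·a_m}) γ_m for 2 ≤ m ≤ M−1, and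
    G_M = ∏_{j<M−1} Γ_j^{1−a_j·a_M}, realized in the standard representation
    of Cl(2(M−1)) = Cl(2^n − 2). -/
noncomputable def GmaxMat {n : ℕ} (M : ℕ) (a : Fin M → Fin n → ZMod 2) (k : Fin M) :
    Matrix (Fin (M - 1) → Fin 2) (Fin (M - 1) → Fin 2) ℂ :=
  if k.val + 1 = M then
    ((List.range (M - 1)).map fun j => GammaOf M j ^ (1 - dotOf a j k.val)).prod
  else
    ((List.range k.val).map fun j => GammaOf M j ^ dotOf a j k.val).prod *
      gammaMat (M - 1) (k.val + 1)

def PFac (t : Fin 2) (m : Matrix (Fin 2) (Fin 2) ℂ) : Prop :=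
  ∀ x y, m x y ≠ 0 ↔ y = x + t

lemma PFac_one : PFac 0 (1 : Matrix (Fin 2) (Fin 2) ℂ) := by
  intro x y; fin_cases x <;> fin_cases y <;>
    simp [Matrix.one_apply] <;> decide

lemma PFac_p1 : PFac 1 pauli1 := by
  intro x y; fin_cases x <;> fin_cases y <;>
    simp [pauli1] <;> decide

lemma PFac_p2 : PFac 1 pauli2 := by
  intro x y; fin_cases x <;> fin_cases y <;>
    simp [pauli2, Complex.I_ne_zero] <;> decide

lemma PFac_p3 : PFac 0 pauli3 := by
  intro x y; fin_cases x <;> fin_cases y <;>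
    simp [pauli3] <;> decide

def PMat {d : ℕ} (t : Fin d → Fin 2) (A : Matrix (Fin d → Fin 2) (Fin d → Fin 2) ℂ) : Prop :=
  ∀ x y, A x y ≠ 0 ↔ y = x + t

lemma PMat_one {d : ℕ} : PMat (0 : Fin d → Fin 2) 1 := by
  intro x y; by_cases h : x = y
  · simp [Matrix.one_apply, h]
  · simp [Matrix.one_apply, h]; exact fun hh => h hh.symm

lemma PMat_mul {d : ℕ} {t s : Fin d → Fin 2} {A B : Matrix (Fin d → Fin 2) (Fin d → Fin 2) ℂ}
    (hA : PMat t A) (hB : PMat s B) : PMat (t + s) (A * B) := by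
  intro x y
  rw [Matrix.mul_apply, Finset.sum_eq_single (x + t)]
  · rw [mul_ne_zero_iff]
    constructor
    · rintro ⟨_, h2⟩; rw [(hB _ _).1 h2]; exact add_assoc x t s
    · intro he; exact ⟨(hA x (x+t)).2 rfl, (hB (x+t) y).2 (by rw [he, add_assoc])⟩
  · intro z _ hz
    have : A x z = 0 := by by_contra hnz; exact hz ((hA x z).1 hnz)
    rw [this, zero_mul]
  · intro hx; exact absurd (Finset.mem_univ _) hx

lemma PMat_smul {d : ℕ} {t : Fin d → Fin 2} {A : Matrix (Fin d → Fin 2) (Fin d → Fin 2) ℂ}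
    {c : ℂ} (hc : c ≠ 0) (hA : PMat t A) : PMat t (c • A) := by
  intro x y
  rw [Matrix.smul_apply, smul_eq_mul, mul_ne_zero_iff]
  constructor
  · rintro ⟨_, h2⟩; exact (hA x y).1 h2
  · intro he; exact ⟨hc, (hA x y).2 he⟩

lemma PMat_pow {d : ℕ} {A : Matrix (Fin d → Fin 2) (Fin d → Fin 2) ℂ}
    (hA : PMat 0 A) (e : ℕ) : PMat (0 : Fin d → Fin 2) (A ^ e) := by
  induction e with
  | zero => rw [pow_zero]; exact PMat_one
  | succ e ih => rw [pow_succ]; have := PMat_mul ih hA; rwa [add_zero] at this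

lemma PMat_listProd {d : ℕ} (l : List (Matrix (Fin d → Fin 2) (Fin d → Fin 2) ℂ))
    (h : ∀ A ∈ l, PMat 0 A) : PMat (0 : Fin d → Fin 2) l.prod := by
  induction l with
  | nil => rw [List.prod_nil]; exact PMat_one
  | cons A l ih =>
      rw [List.prod_cons]
      have := PMat_mul (h A (List.mem_cons_self (a := A) (l := l))) (ih fun B hB => h B (List.mem_cons_of_mem A hB))
      rwa [add_zero] at this

lemma PMat_tensorFun {d : ℕ} {t : Fin d → Fin 2} {F : Fin d → Matrix (Fin 2) (Fin 2) ℂ}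
    (h : ∀ p, PFac (t p) (F p)) : PMat t (tensorFun F) := by
  intro x y
  show (∏ p, F p (x p) (y p)) ≠ 0 ↔ _
  rw [Finset.prod_ne_zero_iff]
  constructor
  · intro hp; funext p
    have := (h p (x p) (y p)).1 (hp p (Finset.mem_univ p))
    simpa using this
  · intro he p _
    exact (h p (x p) (y p)).2 (by rw [he]; simp)

lemma PMat_gamma (m jj : ℕ) :
    PMat (fun p : Fin m => if p.val + 1 ≤ m - jj + 1 then 1 else 0) (gammaMat m jj) := by
  apply PMat_tensorFun
  intro p
  split_ifs <;> first | exact PFac_p1 | exact PFac_p3 | exact PFac_one | (exfalso; omega)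

lemma PMat_gtilde (m jj : ℕ) :
    PMat (fun p : Fin m => if p.val + 1 ≤ m - jj + 1 then 1 else 0) (gtildeMat m jj) := by
  apply PMat_tensorFun
  intro p
  split_ifs <;> first | exact PFac_p1 | exact PFac_p2 | exact PFac_one | (exfalso; omega)

lemma PMat_Gamma (M j : ℕ) : PMat (0 : Fin (M-1) → Fin 2) (GammaOf M j) := by
  unfold GammaOf
  split_ifs with h
  · have := PMat_smul Complex.I_ne_zero (PMat_mul (PMat_gamma (M-1) (j+1)) (PMat_gtilde (M-1) (j+1)))
    have h0 : ((fun p : Fin (M-1) => if p.val + 1 ≤ (M-1) - (j+1) + 1 then (1 : Fin 2) else 0)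
        + fun p : Fin (M-1) => if p.val + 1 ≤ (M-1) - (j+1) + 1 then (1 : Fin 2) else 0) = 0 := by
      funext p
      have : ∀ x : Fin 2, x + x = 0 := by decide
      exact this _
    rwa [h0] at this
  · exact PMat_one

def vflip (M k : ℕ) : Fin (M-1) → Fin 2 := fun p => if p.val + k + 1 < M then 1 else 0

lemma PMat_Gmax {n M : ℕ} (a : Fin M → Fin n → ZMod 2) (k : Fin M) :
    PMat (vflip M k.val) (GmaxMat M a k) := by
  have hk := k.isLt
  unfold GmaxMat
  split_ifs with h
  · have h0 : vflip M k.val = 0 := by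
      funext p; have hp := p.isLt; simp only [vflip]; rw [if_neg (by omega)]; rfl
    rw [h0]
    refine PMat_listProd _ ?_
    intro A hA
    simp only [List.mem_map, List.mem_range] at hA
    obtain ⟨j, _, rfl⟩ := hA
    exact PMat_pow (PMat_Gamma M j) _
  · have hprod : PMat (0 : Fin (M-1) → Fin 2)
        ((List.range k.val).map fun j => GammaOf M j ^ dotOf a j k.val).prod := by
      refine PMat_listProd _ ?_
      intro A hA
      simp only [List.mem_map, List.mem_range] at hA
      obtain ⟨j, _, rfl⟩ := hA
      exact PMat_pow (PMat_Gamma M j) _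
    have := PMat_mul hprod (PMat_gamma (M-1) (k.val+1))
    have h0 : vflip M k.val = 0 + fun p : Fin (M-1) =>
        if p.val + 1 ≤ (M-1) - (k.val+1) + 1 then (1 : Fin 2) else 0 := by
      funext p; have hp := p.isLt
      simp only [Pi.add_apply, Pi.zero_apply, zero_add, vflip]
      exact if_congr (by omega) rfl rfl
    rwa [h0]

lemma vflip_add_inj {M : ℕ} (hM2 : 2 ≤ M) {k l k' l' : Fin M}
    (h1 : k < l) (h2 : k' < l')
    (h : vflip M k.val + vflip M l.val = vflip M k'.val + vflip M l'.val) :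
    k = k' ∧ l = l' := by
  have hkl : k.val < l.val := h1
  have hkl' : k'.val < l'.val := h2
  have hl := l.isLt
  have hl' := l'.isLt
  have key : ∀ p : Fin (M-1),
      ((p.val + k.val + 1 < M ∧ ¬(p.val + l.val + 1 < M)) ↔
       (p.val + k'.val + 1 < M ∧ ¬(p.val + l'.val + 1 < M))) := by
    intro p
    have hp := congrFun h p
    simp only [Pi.add_apply, vflip] at hp
    split_ifs at hp <;> first | omega | (revert hp; decide)
  have e1 := key ⟨M-2-k.val, by omega⟩
  have e2 := key ⟨M-2-k'.val, by omega⟩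
  have e3 := key ⟨M-2-l.val, by omega⟩
  have e4 := key ⟨M-2-l'.val, by omega⟩
  simp only [] at e1 e2 e3 e4
  constructor <;> (apply Fin.ext; omega)

noncomputable def entryLM {d : ℕ} (x y : Fin d → Fin 2) :
    Matrix (Fin d → Fin 2) (Fin d → Fin 2) ℂ →ₗ[ℂ] ℂ where
  toFun m := m x y
  map_add' := fun _ _ => rfl
  map_smul' := fun _ _ => rfl


/-- in the maximal model, the central elements
    Z_{kℓ} = (−i)^{1−a_k·a_ℓ} G_kG_ℓ ⊗ 𝖧 for distinct unordered pairs {k,ℓ}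
    (represented by k < ℓ) are linearly independent, provided 𝖧 ≠ 0. -/
theorem Zmax_linearIndependent {B : Type*} [Ring B] [Algebra ℂ B]
    (n : ℕ) (hn : 2 ≤ n) (M : ℕ) (hM : M = 2 ^ (n - 1))
    (a : Fin M → Fin n → ZMod 2)
    (hpar : ∀ k, (∑ j, a k j) = 1) (hinj : Function.Injective a)
    (sH : B) (hsH : sH ≠ 0) :
    LinearIndependent ℂ (fun p : {p : Fin M × Fin M // p.1 < p.2} =>
      (((-Complex.I) ^ (1 - dotOf a p.1.1.val p.1.2.val)) •
        ((GmaxMat M a p.1.1 * GmaxMat M a p.1.2) ⊗ₜ[ℂ] sH) :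
        Matrix (Fin (M - 1) → Fin 2) (Fin (M - 1) → Fin 2) ℂ ⊗[ℂ] B)) := by
  have hM2 : 2 ≤ M := by
    rw [hM]
    calc 2 = 2 ^ 1 := by norm_num
    _ ≤ 2 ^ (n-1) := Nat.pow_le_pow_right (by norm_num) (by omega)
  rw [Fintype.linearIndependent_iff]
  intro g hg p0
  have : True := trivial
  set c : {p : Fin M × Fin M // p.1 < p.2} → ℂ := fun p => (-Complex.I) ^ (1 - dotOf a p.1.1.val p.1.2.val) with hc
  set A : {p : Fin M × Fin M // p.1 < p.2} → Matrix (Fin (M-1) → Fin 2) (Fin (M-1) → Fin 2) ℂ :=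
    fun p => GmaxMat M a p.1.1 * GmaxMat M a p.1.2 with hA
  set w : {p : Fin M × Fin M // p.1 < p.2} → (Fin (M-1) → Fin 2) := fun p => vflip M p.1.1.val + vflip M p.1.2.val with hw
  have hP : ∀ p : {p : Fin M × Fin M // p.1 < p.2}, PMat (w p) (A p) := fun p =>
    PMat_mul (PMat_Gmax a p.1.1) (PMat_Gmax a p.1.2)
  -- the evaluation functional at entry (0, w p0)
  set Φ : (Matrix (Fin (M-1) → Fin 2) (Fin (M-1) → Fin 2) ℂ ⊗[ℂ] B) →ₗ[ℂ] B :=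
    (TensorProduct.lid ℂ B).toLinearMap ∘ₗ
      TensorProduct.map (entryLM 0 (w p0)) LinearMap.id with hΦ
  have hΦ0 : ∀ (m : Matrix (Fin (M-1) → Fin 2) (Fin (M-1) → Fin 2) ℂ),
      Φ (m ⊗ₜ[ℂ] sH) = m 0 (w p0) • sH := by
    intro m
    simp [hΦ, TensorProduct.map_tmul, TensorProduct.lid_tmul, entryLM]
    rfl
  have h2 : (∑ p : {p : Fin M × Fin M // p.1 < p.2}, g p * c p * A p 0 (w p0)) • sH = 0 := by
    rw [Finset.sum_smul]
    calc ∑ p : {p : Fin M × Fin M // p.1 < p.2}, (g p * c p * A p 0 (w p0)) • sH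
        = ∑ p : {p : Fin M × Fin M // p.1 < p.2}, Φ (g p • (c p • (A p ⊗ₜ[ℂ] sH))) := by
          refine Finset.sum_congr rfl fun p _ => ?_
          rw [LinearMap.map_smul, LinearMap.map_smul, hΦ0, smul_smul, smul_smul, mul_assoc]
      _ = Φ (∑ p : {p : Fin M × Fin M // p.1 < p.2}, g p • (c p • (A p ⊗ₜ[ℂ] sH))) := (map_sum Φ _ _).symm
      _ = 0 := by rw [hg, map_zero]
  have hz : ∀ q : {p : Fin M × Fin M // p.1 < p.2}, q ≠ p0 → g q * c q * A q 0 (w p0) = 0 := by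
    intro q hq
    have : A q 0 (w p0) = 0 := by
      by_contra hnz
      have := (hP q 0 (w p0)).1 hnz
      rw [zero_add] at this
      have hqp : q = p0 := by
        obtain ⟨hk, hl⟩ := vflip_add_inj hM2 q.2 p0.2 this.symm
        exact Subtype.ext (Prod.ext hk hl)
      exact hq hqp
    rw [this, mul_zero]
  have h3 : ∑ p : {p : Fin M × Fin M // p.1 < p.2}, g p * c p * A p 0 (w p0) = g p0 * c p0 * A p0 0 (w p0) :=
    Finset.sum_eq_single p0 (fun q _ hq => hz q hq) (fun h => absurd (Finset.mem_univ _) h)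
  have h4 : g p0 * c p0 * A p0 0 (w p0) = 0 := by
    by_contra hs
    apply hsH
    have := h2
    rw [h3] at this
    calc sH = (g p0 * c p0 * A p0 0 (w p0))⁻¹ • ((g p0 * c p0 * A p0 0 (w p0)) • sH) := by
          rw [smul_smul, inv_mul_cancel₀ hs, one_smul]
    _ = 0 := by rw [this, smul_zero]
  have hcne : c p0 ≠ 0 := pow_ne_zero _ (neg_ne_zero.mpr Complex.I_ne_zero)
  have hAne : A p0 0 (w p0) ≠ 0 := (hP p0 0 (w p0)).2 (zero_add _).symm
  rcases mul_eq_zero.1 h4 with h | h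
  · rcases mul_eq_zero.1 h with h' | h'
    · exact h'
    · exact absurd h' hcne
  · exact absurd h hAne
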